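/- Let G be a finite group, N ⊴ G, and Z ≤ Z(G) a central subgroup with Z ∩ N = {1}. Then for every irreducible character λ of ZN/N ≅ Z, inflation from G/N to G defines a bijection between the set Irr(G/N | λ) of irreducible characters of G/N lying over λ (viewing λ as a character of ZN/N) and the set Irr(G | Inf(λ)) of irreducible characters of G lying over the inflation of λ to ZN. -/

import Mathlib

open scoped Classical

/-- `χ : G → ℂ` is an irreducible (complex) character of `G`:
the character of a simple finite-dimensional complex representation. -/
def IsIrrChar (G : Type) [Group G] (χ : G → ℂ) : Prop :=
  ∃ V : FDRep ℂ G, CategoryTheory.Simple V ∧ χ = V.character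

/-- The usual inner product of class functions on a finite group `H`. -/
noncomputable def charInner (H : Type*) [Finite H] (φ ψ : H → ℂ) : ℂ :=
  letI := Fintype.ofFinite H
  (Fintype.card H : ℂ)⁻¹ * ∑ h : H, φ h * (starRingEnd ℂ) (ψ h)

namespace Stmt13Aux

open CategoryTheory
open scoped Pointwise

variable {G H : Type} [Group G] [Group H]

/-- Build a morphism in `FDRep ℂ G` from an equivariant linear map. -/
def mkHom {V W : FDRep ℂ G} (f : V →ₗ[ℂ] W)
    (h : ∀ (g : G) (x : V), f (V.ρ g x) = W.ρ g (f x)) : V ⟶ W where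
  hom := FGModuleCat.ofHom f
  comm g := by ext x; exact h g x

theorem hom_comm_apply' {V W : FDRep ℂ G} (f : V ⟶ W) (g : G) (x : V) :
    f.hom.hom.hom (V.ρ g x) = W.ρ g (f.hom.hom.hom x) :=
  LinearMap.congr_fun (congrArg (fun k => k.hom.hom) (f.comm g)) x

theorem mono_of_injective {V W : FDRep ℂ G} (f : V ⟶ W)
    (hf : Function.Injective f.hom.hom.hom) : Mono f := by
  constructor
  intro Y a b h
  ext x
  apply hf
  have : (a ≫ f).hom.hom.hom = (b ≫ f).hom.hom.hom := by rw [h]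
  exact LinearMap.congr_fun this x

theorem isIso_of_bijective {V W : FDRep ℂ G} (f : V ⟶ W)
    (hf : Function.Bijective f.hom.hom.hom) : IsIso f := by
  let e : (V : Type) ≃ₗ[ℂ] (W : Type) := LinearEquiv.ofBijective f.hom.hom.hom hf
  refine ⟨mkHom (e.symm : W →ₗ[ℂ] V) ?_, ?_, ?_⟩
  · intro g x
    apply hf.injective
    rw [hom_comm_apply' f]
    have h1 : ∀ y : (W : Type), f.hom.hom.hom ((e.symm : (W : Type) →ₗ[ℂ] (V : Type)) y) = y :=
      fun y => e.apply_symm_apply y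
    rw [h1, h1]
  · ext x
    exact e.symm_apply_apply x
  · ext x
    exact e.apply_symm_apply x

noncomputable def subρ (V : FDRep ℂ G) (p : Submodule ℂ V)
    (hp : ∀ (g : G) (x : V), x ∈ p → V.ρ g x ∈ p) :
    Representation ℂ G p where
  toFun g := (V.ρ g).restrict (fun x hx => hp g x hx)
  map_one' := by ext x; simp [LinearMap.restrict_apply]
  map_mul' g h := by ext x; simp [LinearMap.restrict_apply]

theorem simple_iff (V : FDRep ℂ G) :
    Simple V ↔ ((∃ v : V, v ≠ 0) ∧
      ∀ p : Submodule ℂ V, (∀ (g : G) (x : V), x ∈ p → V.ρ g x ∈ p) → p = ⊥ ∨ p = ⊤) := by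
  constructor
  · intro hs
    constructor
    · by_contra h
      push_neg at h
      apply CategoryTheory.id_nonzero V
      ext x
      show x = (0 : V ⟶ V).hom x
      rw [Action.zero_hom]
      exact h x
    · intro p hp
      by_cases hbot : p = ⊥
      · exact Or.inl hbot
      right
      obtain ⟨x, hxp, hx0⟩ := (Submodule.ne_bot_iff _).mp hbot
      let ι : FDRep.of (subρ V p hp) ⟶ V := mkHom (p.subtype) (fun g x => rfl)
      haveI : Mono ι := mono_of_injective ι (Subtype.val_injective)
      have hι0 : ι ≠ 0 := by
        intro h
        apply hx0
        have h2 := LinearMap.congr_fun (congrArg (fun k => k.hom.hom.hom) h) ⟨x, hxp⟩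
        rw [Action.zero_hom] at h2
        exact h2
      haveI : IsIso ι := (Simple.mono_isIso_iff_nonzero ι).mpr hι0
      have hsurj : ∀ v : V, ∃ y : p, p.subtype y = v := by
        intro v
        refine ⟨(CategoryTheory.inv ι).hom v, ?_⟩
        have h3 := LinearMap.congr_fun (congrArg (fun k => k.hom.hom.hom) (IsIso.inv_hom_id ι)) v
        exact h3
      rw [Submodule.eq_top_iff']
      intro v
      obtain ⟨y, hy⟩ := hsurj v
      exact hy ▸ y.2
  · rintro ⟨⟨v0, hv0⟩, hinv⟩
    constructor
    intro Y f hm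
    constructor
    · intro hiso h0
      apply hv0
      obtain ⟨finv, -, hfi2⟩ := hiso.out
      rw [h0, Limits.comp_zero] at hfi2
      have h1 := LinearMap.congr_fun (congrArg (fun k => k.hom.hom.hom) hfi2) v0
      rw [Action.id_hom, Action.zero_hom] at h1
      exact h1.symm
    · intro hne
      have hkinv : ∀ (g : G) (y : Y), y ∈ LinearMap.ker f.hom.hom.hom →
          Y.ρ g y ∈ LinearMap.ker f.hom.hom.hom := by
        intro g y hy
        rw [LinearMap.mem_ker] at hy ⊢
        exact (hom_comm_apply' f g y).trans ((congrArg (V.ρ g) hy).trans (map_zero _))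
      have hker : LinearMap.ker f.hom.hom.hom = ⊥ := by
        by_contra hk
        obtain ⟨x, hxk, hx0⟩ := (Submodule.ne_bot_iff _).mp hk
        let k : FDRep.of (subρ Y _ hkinv) ⟶ Y := mkHom (Submodule.subtype _) (fun g x => rfl)
        have hcomp : k ≫ f = 0 ≫ f := by
          rw [Limits.zero_comp]
          apply Action.hom_ext
          rw [Action.comp_hom, Action.zero_hom]
          apply FGModuleCat.hom_ext
          apply LinearMap.ext
          intro y
          show f.hom.hom.hom ((Submodule.subtype _) y) = _
          show _ = (0 : V)
          exact y.2
        have hk0 : k = 0 := Mono.right_cancellation k 0 hcomp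
        have h4 := LinearMap.congr_fun (congrArg (fun k => k.hom.hom.hom) hk0) ⟨x, hxk⟩
        rw [Action.zero_hom] at h4
        exact hx0 h4
      have hrange : LinearMap.range f.hom.hom.hom = ⊤ := by
        rcases hinv (LinearMap.range f.hom.hom.hom) (fun g x hx => by
          obtain ⟨y, rfl⟩ := hx
          exact ⟨Y.ρ g y, hom_comm_apply' f g y⟩) with h | h
        · exfalso
          apply hne
          ext y
          show f.hom.hom.hom y = (0 : Y ⟶ V).hom y
          rw [Action.zero_hom]
          have : f.hom.hom.hom y ∈ LinearMap.range f.hom.hom.hom :=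
            ⟨y, rfl⟩
          rw [h] at this
          exact this
        · exact h
      exact isIso_of_bijective f
        ⟨LinearMap.ker_eq_bot.mp hker, LinearMap.range_eq_top.mp hrange⟩

noncomputable def pullback (f : G →* H) (V : FDRep ℂ H) : FDRep ℂ G :=
  FDRep.of ((V.ρ : Representation ℂ H V).comp f)

theorem pullback_ρ (f : G →* H) (V : FDRep ℂ H) (g : G) :
    (pullback f V).ρ g = V.ρ (f g) := rfl

theorem pullback_character (f : G →* H) (V : FDRep ℂ H) (g : G) :
    (pullback f V).character g = V.character (f g) := rfl

noncomputable def descendρ (N : Subgroup G) [N.Normal] (V : FDRep ℂ G)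
    (htriv : ∀ n ∈ N, V.ρ n = 1) :
    Representation ℂ (G ⧸ N) V where
  toFun q := Quotient.liftOn' q V.ρ (fun a b hab => by
    have h : a⁻¹ * b ∈ N := QuotientGroup.leftRel_apply.mp hab
    calc V.ρ a = V.ρ a * V.ρ (a⁻¹ * b) := by rw [htriv _ h, mul_one]
    _ = V.ρ b := by rw [← map_mul]; congr 1; group)
  map_one' := map_one V.ρ
  map_mul' x y := Quotient.inductionOn₂' x y (fun a b => map_mul V.ρ a b)

theorem central_scalar (V : FDRep ℂ G) [Simple V] (z : G) (hz : z ∈ Subgroup.center G) :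
    ∃ c : ℂ, V.ρ z = c • (1 : (V : Type) →ₗ[ℂ] V) := by
  obtain ⟨c, hc⟩ := CategoryTheory.endomorphism_simple_eq_smul_id (C := FDRep ℂ G) ℂ
    (mkHom (V.ρ z) (fun g x => by
      rw [← Module.End.mul_apply, ← Module.End.mul_apply, ← map_mul, ← map_mul,
        (Subgroup.mem_center_iff.mp hz g)]))
  refine ⟨c, ?_⟩
  have h2 := congrArg (fun k => k.hom.hom.hom) hc
  exact h2.symm

theorem rho_triv [Finite G] (V : FDRep ℂ G) [Simple V] (N : Subgroup G) [N.Normal]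
    (h : (letI := Fintype.ofFinite ↥N; ∑ n : ↥N, V.character ↑n) ≠ 0) :
    ∀ n ∈ N, V.ρ n = 1 := by
  letI := Fintype.ofFinite ↥N
  set S : (V : Type) →ₗ[ℂ] V := ∑ n : ↥N, V.ρ (n : G) with hS
  have hconj : ∀ g : G, V.ρ g * S = S * V.ρ g := by
    intro g
    rw [hS, Finset.mul_sum, Finset.sum_mul]
    refine Fintype.sum_equiv (MulAut.conjNormal g).toEquiv _ _ (fun n => ?_)
    rw [MulEquiv.toEquiv_eq_coe, EquivLike.coe_coe, ← map_mul, ← map_mul]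
    congr 1
    rw [MulAut.conjNormal_apply]
    group
  have hmul : ∀ m ∈ N, V.ρ m * S = S := by
    intro m hm
    rw [hS, Finset.mul_sum]
    refine Fintype.sum_equiv (Equiv.mulLeft (⟨m, hm⟩ : ↥N)) _ _ (fun n => ?_)
    rw [← map_mul]
    rfl
  obtain ⟨c, hc⟩ : ∃ c : ℂ, S = c • (1 : (V : Type) →ₗ[ℂ] V) := by
    obtain ⟨c, hc⟩ := CategoryTheory.endomorphism_simple_eq_smul_id (C := FDRep ℂ G) ℂ
      (mkHom S (fun g x => by
        have h5 := LinearMap.congr_fun (hconj g) x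
        rw [Module.End.mul_apply, Module.End.mul_apply] at h5
        exact h5.symm))
    refine ⟨c, ?_⟩
    have h2 := congrArg (fun k => k.hom.hom.hom) hc
    exact h2.symm
  have hc0 : c ≠ 0 := by
    intro h0
    apply h
    have hS0 : S = 0 := by rw [hc, h0, zero_smul]
    have ht : ∑ n : ↥N, V.character (n : G) = LinearMap.trace ℂ V S := by
      rw [hS, map_sum]
      rfl
    rw [ht, hS0, map_zero]
  intro m hm
  have h6 := hmul m hm
  rw [hc, mul_smul_comm, mul_one] at h6
  exact smul_right_injective _ hc0 h6

/-- decomposition `Z × N ≃ Z ⊔ N` -/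
noncomputable def znEquiv (N Z : Subgroup G) [N.Normal] (hZN : Z ⊓ N = ⊥) :
    ↥Z × ↥N ≃ ↥(Z ⊔ N) := by
  refine Equiv.ofBijective (fun p => ⟨(p.1 : G) * (p.2 : G),
    mul_mem (Subgroup.mem_sup_left p.1.2) (Subgroup.mem_sup_right p.2.2)⟩) ⟨?_, ?_⟩
  · rintro ⟨z1, n1⟩ ⟨z2, n2⟩ hp
    have h : (z1 : G) * n1 = (z2 : G) * n2 := congrArg Subtype.val hp
    have h3 : (z2 : G)⁻¹ * z1 = (n2 : G) * (n1 : G)⁻¹ := by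
      have h2 : (z2 : G)⁻¹ * ((z1 : G) * n1) * (n1 : G)⁻¹ = (n2 : G) * (n1 : G)⁻¹ := by
        rw [h]; group
      rw [← h2]; group
    have hmem : (z2 : G)⁻¹ * z1 ∈ Z ⊓ N := by
      constructor
      · exact Z.mul_mem (Z.inv_mem z2.2) z1.2
      · rw [h3]
        exact N.mul_mem n2.2 (N.inv_mem n1.2)
    rw [hZN, Subgroup.mem_bot, inv_mul_eq_one] at hmem
    have hn : (n1 : G) = n2 := by
      have := mul_left_cancel (h.symm.trans (by rw [hmem]))
      exact this.symm
    have hz' : z1 = z2 := Subtype.ext hmem.symm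
    have hn' : n1 = n2 := Subtype.ext hn
    rw [hz', hn']
  · rintro ⟨x, hx⟩
    have hx' : x ∈ (Z : Set G) * (N : Set G) := by
      rw [← Subgroup.mul_normal Z N]
      exact hx
    rw [Set.mem_mul] at hx'
    obtain ⟨z, hz, n, hn, hzn⟩ := hx'
    exact ⟨(⟨z, hz⟩, ⟨n, hn⟩), Subtype.ext hzn⟩

theorem sum_factor [Finite G] (N Z : Subgroup G) [N.Normal]
    (hZ : Z ≤ Subgroup.center G) (hZN : Z ⊓ N = ⊥)
    (V : FDRep ℂ G) [Simple V] (lam : ↥Z → ℂ) (μ : ↥(Z ⊔ N) → ℂ)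
    (hμZ : ∀ z : G, ∀ hz : z ∈ Z, μ ⟨z, Subgroup.mem_sup_left hz⟩ = lam ⟨z, hz⟩)
    (hμN : ∀ (g : ↥(Z ⊔ N)) (n : G) (hn : n ∈ N),
      μ (g * ⟨n, Subgroup.mem_sup_right hn⟩) = μ g) :
    ∃ a : ℂ,
      (letI := Fintype.ofFinite ↥(Z ⊔ N);
        ∑ x : ↥(Z ⊔ N), V.character ↑x * (starRingEnd ℂ) (μ x)) =
      a * (letI := Fintype.ofFinite ↥N; ∑ n : ↥N, V.character ↑n) := by
  letI := Fintype.ofFinite ↥(Z ⊔ N)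
  letI := Fintype.ofFinite ↥N
  letI := Fintype.ofFinite ↥Z
  set ω : ↥Z → ℂ := fun z => (central_scalar V ↑z (hZ z.2)).choose with hωdef
  have hω : ∀ z : ↥Z, V.ρ (z : G) = ω z • (1 : (V : Type) →ₗ[ℂ] V) :=
    fun z => (central_scalar V ↑z (hZ z.2)).choose_spec
  refine ⟨∑ z : ↥Z, ω z * (starRingEnd ℂ) (lam z), ?_⟩
  let e := znEquiv N Z hZN
  rw [← Equiv.sum_comp e (fun x => V.character ↑x * (starRingEnd ℂ) (μ x))]
  have hterm : ∀ p : ↥Z × ↥N,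
      V.character ↑(e p) * (starRingEnd ℂ) (μ (e p)) =
      (ω p.1 * (starRingEnd ℂ) (lam p.1)) * V.character ↑p.2 := by
    rintro ⟨z, n⟩
    have hco : (↑(e (z, n)) : G) = (z : G) * n := rfl
    have hμ : μ (e (z, n)) = lam z := by
      have h1 : e (z, n) = (⟨(z : G), Subgroup.mem_sup_left z.2⟩ : ↥(Z ⊔ N)) *
          ⟨(n : G), Subgroup.mem_sup_right n.2⟩ := Subtype.ext rfl
      rw [h1, hμN _ _ n.2, hμZ _ z.2]
    have hchar : V.character ((z : G) * n) = ω z * V.character (n : G) := by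
      show LinearMap.trace ℂ _ (V.ρ ((z : G) * n)) = _
      rw [map_mul, hω z, smul_mul_assoc, one_mul, map_smul, smul_eq_mul]
      rfl
    rw [hco, hμ, hchar]
    ring
  rw [Finset.sum_congr rfl (fun p _ => hterm p), Fintype.sum_prod_type]
  rw [Finset.sum_mul]
  refine Finset.sum_congr rfl (fun z _ => ?_)
  rw [Finset.mul_sum]

end Stmt13Aux

open Stmt13Aux CategoryTheory in
/-- for `N ⊴ G`, `Z ≤ Z(G)` with `Z ∩ N = 1`, and `λ` an irreducible
character of `ZN/N ≅ Z`, inflation along `G/N → G` is a bijection from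
`Irr(G/N ∣ λ)` onto `Irr(G ∣ Inf_Z^{ZN} λ)`. Here `μ : ZN → ℂ` is the inflation of
`λ` to `ZN` (the function agreeing with `λ` on `Z` and constant on `N`-cosets), and
lying over `λ` (resp. over `μ`) is expressed by a nonzero inner product with `μ`
over `ZN`, which for a character of `G/N` agrees with the inner product with `λ`
over `ZN/N`. -/
theorem stmt_13 (G : Type) [Group G] [Finite G] (N Z : Subgroup G) [N.Normal]
    (hZ : Z ≤ Subgroup.center G) (hZN : Z ⊓ N = ⊥)
    (lam : ↥Z → ℂ) (hlam : IsIrrChar ↥Z lam)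
    (μ : ↥(Z ⊔ N) → ℂ)
    (hμZ : ∀ z : G, ∀ hz : z ∈ Z, μ ⟨z, Subgroup.mem_sup_left hz⟩ = lam ⟨z, hz⟩)
    (hμN : ∀ (g : ↥(Z ⊔ N)) (n : G) (hn : n ∈ N),
      μ (g * ⟨n, Subgroup.mem_sup_right hn⟩) = μ g) :
    Set.BijOn (fun χ : (G ⧸ N) → ℂ => χ ∘ (QuotientGroup.mk' N))
      {χ : (G ⧸ N) → ℂ | IsIrrChar (G ⧸ N) χ ∧
        charInner ↥(Z ⊔ N) (fun x => χ (QuotientGroup.mk' N ↑x)) μ ≠ 0}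
      {χ : G → ℂ | IsIrrChar G χ ∧
        charInner ↥(Z ⊔ N) (fun x => χ ↑x) μ ≠ 0} := by
  have hπs : Function.Surjective (QuotientGroup.mk' N) := QuotientGroup.mk'_surjective N
  refine ⟨?_, ?_, ?_⟩
  · -- MapsTo
    rintro χ ⟨⟨V, hV, rfl⟩, hip⟩
    haveI := hV
    refine ⟨⟨pullback (QuotientGroup.mk' N) V, ?_, funext fun g => rfl⟩, ?_⟩
    · have hc := (simple_iff V).mp hV
      refine (simple_iff (pullback (QuotientGroup.mk' N) V)).mpr ⟨hc.1, ?_⟩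
      intro p hp
      refine hc.2 p (fun h x hx => ?_)
      obtain ⟨g, rfl⟩ := hπs h
      exact hp g x hx
    · exact hip
  · -- InjOn
    intro χ₁ _ χ₂ _ h
    funext q
    obtain ⟨g, rfl⟩ := hπs q
    exact congrFun h g
  · -- SurjOn
    rintro χ ⟨⟨V, hV, rfl⟩, hip⟩
    haveI := hV
    have hsum : (letI := Fintype.ofFinite ↥(Z ⊔ N);
        ∑ x : ↥(Z ⊔ N), V.character ↑x * (starRingEnd ℂ) (μ x)) ≠ 0 := by
      intro h0
      apply hip
      unfold charInner
      rw [h0, mul_zero]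
    obtain ⟨a, ha⟩ := sum_factor N Z hZ hZN V lam μ hμZ hμN
    have hNsum : (letI := Fintype.ofFinite ↥N; ∑ n : ↥N, V.character ↑n) ≠ 0 :=
      right_ne_zero_of_mul (ha ▸ hsum)
    have htriv : ∀ n ∈ N, V.ρ n = 1 := rho_triv V N hNsum
    refine ⟨(FDRep.of (descendρ N V htriv)).character, ⟨⟨FDRep.of (descendρ N V htriv), ?_, rfl⟩, ?_⟩, ?_⟩
    · have hc := (simple_iff V).mp hV
      refine (simple_iff (FDRep.of (descendρ N V htriv))).mpr ⟨hc.1, ?_⟩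
      intro p hp
      exact hc.2 p (fun g x hx => hp (QuotientGroup.mk' N g) x hx)
    · exact hip
    · funext g
      rfl
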